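/- Let M be a finite-dimensional weight module over U(∞) (i.e. M = ⊕_{λ∈X(∞)} M_λ where M_λ = {x : K_i x = v^{λ_i} x for all i}). Then E_i M = F_i M = 0 for all i ∈ ℤ, and every weight of M is a constant sequence: wt(M) ⊆ { k·𝟏 : k ∈ ℤ } where 𝟏 = (…,1,1,1,…). Consequently every finite-dimensional weight U(∞)-module is a direct sum of one-dimensional modules L(k𝟏), and is completely reducible. -/

import Mathlib

open scoped BigOperators Classical

noncomputable section

/-- `v ∈ ℚ(v)`. -/
def qv : RatFunc ℚ := RatFunc.X

lemma qv_ne_zero : qv ≠ 0 := RatFunc.X_ne_zero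

lemma qv_pow_nat_eq_one {m : ℕ} (h : qv ^ m = 1) : m = 0 := by
  have h1 : (algebraMap (Polynomial ℚ) (RatFunc ℚ)) (Polynomial.X ^ m) = algebraMap _ _ 1 := by
    rw [map_pow, RatFunc.algebraMap_X, map_one]; exact h
  have h2 : (Polynomial.X : Polynomial ℚ) ^ m = 1 :=
    IsFractionRing.injective (Polynomial ℚ) (RatFunc ℚ) h1
  have := congrArg Polynomial.natDegree h2
  simpa using this

lemma qv_zpow_inj {a b : ℤ} (h : qv ^ a = qv ^ b) : a = b := by
  have h1 : qv ^ (a - b) = 1 := by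
    rw [zpow_sub₀ qv_ne_zero, h, div_self (zpow_ne_zero _ qv_ne_zero)]
  have : a - b = 0 := by
    obtain ⟨m, hm | hm⟩ := Int.eq_nat_or_neg (a - b)
    · rw [hm, zpow_natCast] at h1
      rw [hm, qv_pow_nat_eq_one h1]; rfl
    · rw [hm, zpow_neg, zpow_natCast, inv_eq_one] at h1
      rw [hm, qv_pow_nat_eq_one h1]; rfl
  omega

lemma qv_sub_inv_ne_zero : (qv - qv⁻¹)⁻¹ ≠ 0 := by
  apply inv_ne_zero
  rw [sub_ne_zero]
  intro h
  have h2 : qv * qv = 1 := by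
    nth_rewrite 2 [h]; exact mul_inv_cancel₀ qv_ne_zero
  have : qv ^ (2:ℤ) = qv ^ (0:ℤ) := by
    rw [zpow_ofNat, zpow_zero, pow_two]; exact h2
  have := qv_zpow_inj this
  omega

def addAlpha (lam : ℤ → ℤ) (j : ℤ) : ℤ → ℤ :=
  fun i => lam i + ((if i = j then 1 else 0) - (if i = j + 1 then 1 else 0))

def subAlpha (lam : ℤ → ℤ) (j : ℤ) : ℤ → ℤ :=
  fun i => lam i + ((if i = j + 1 then 1 else 0) - (if i = j then 1 else 0))

lemma usmul_comm {U : Type} [Ring U] [Algebra (RatFunc ℚ) U] {M : Type}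
    [AddCommGroup M] [Module (RatFunc ℚ) M] [Module U M]
    [IsScalarTower (RatFunc ℚ) U M] (u : U) (c : RatFunc ℚ) (x : M) :
    u • (c • x) = c • (u • x) := by
  have h1 : c • x = (c • (1:U)) • x := by rw [smul_assoc, one_smul]
  rw [h1, ← mul_smul, mul_smul_comm, mul_one, smul_assoc]

def actL {U : Type} [Ring U] [Algebra (RatFunc ℚ) U] (M : Type)
    [AddCommGroup M] [Module (RatFunc ℚ) M] [Module U M]
    [IsScalarTower (RatFunc ℚ) U M] (u : U) : M →ₗ[RatFunc ℚ] M where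
  toFun := fun x => u • x
  map_add' := smul_add u
  map_smul' := fun c x => usmul_comm u c x

def Wt {U : Type} [Ring U] [Algebra (RatFunc ℚ) U] (K : ℤ → U) (M : Type)
    [AddCommGroup M] [Module (RatFunc ℚ) M] [Module U M]
    [IsScalarTower (RatFunc ℚ) U M] (lam : ℤ → ℤ) : Submodule (RatFunc ℚ) M where
  carrier := {x : M | ∀ i : ℤ, K i • x = (qv ^ lam i) • x}
  add_mem' := fun {a b} ha hb => by
    intro i; rw [smul_add, ha i, hb i, smul_add]
  zero_mem' := by intro i; rw [smul_zero, smul_zero]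
  smul_mem' := fun c x hx => by
    intro i; rw [usmul_comm, hx i, smul_smul, smul_smul, mul_comm]

lemma mem_Wt {U : Type} [Ring U] [Algebra (RatFunc ℚ) U] {K : ℤ → U} {M : Type}
    [AddCommGroup M] [Module (RatFunc ℚ) M] [Module U M]
    [IsScalarTower (RatFunc ℚ) U M] {lam : ℤ → ℤ} {x : M} :
    x ∈ Wt K M lam ↔ ∀ i : ℤ, K i • x = (qv ^ lam i) • x := Iff.rfl

/-- The defining relations of the quantum group `U_v(gl_∞)` over `ℚ(v)`, for a family
of elements `E i, F i, K i, K i ⁻¹ = Kinv i` (`i ∈ ℤ`) of a `ℚ(v)`-algebra `U`. -/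
def UqRel (U : Type*) [Ring U] [Algebra (RatFunc ℚ) U]
    (E F K Kinv : ℤ → U) : Prop :=
  (∀ i j : ℤ, K i * K j = K j * K i) ∧
  (∀ i : ℤ, K i * Kinv i = 1 ∧ Kinv i * K i = 1) ∧
  (∀ i j : ℤ, K i * E j =
    (qv ^ (((if i = j then 1 else 0) - (if i = j + 1 then 1 else 0) : ℤ))) • (E j * K i)) ∧
  (∀ i j : ℤ, K i * F j =
    (qv ^ (((if i = j + 1 then 1 else 0) - (if i = j then 1 else 0) : ℤ))) • (F j * K i)) ∧
  (∀ i j : ℤ, 1 < |i - j| → E i * E j = E j * E i ∧ F i * F j = F j * F i) ∧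
  (∀ i j : ℤ, E i * F j - F j * E i =
    if i = j then (qv - qv⁻¹)⁻¹ • (K i * Kinv (i+1) - Kinv i * K (i+1)) else 0) ∧
  (∀ i j : ℤ, |i - j| = 1 →
    E i * E i * E j - (qv + qv⁻¹) • (E i * E j * E i) + E j * E i * E i = 0) ∧
  (∀ i j : ℤ, |i - j| = 1 →
    F i * F i * F j - (qv + qv⁻¹) • (F i * F j * F i) + F j * F i * F i = 0)

/-- a finite-dimensional weight module `M` over `U(∞)` is annihilated by all
`E_i, F_i`, all its weights are constant sequences, and `M` is a direct sum of
one-dimensional modules `L(k·𝟏)`; in particular `M` is completely reducible. -/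
theorem stmt_16 (U : Type) [Ring U] [Algebra (RatFunc ℚ) U]
    (E F K Kinv : ℤ → U) (hrel : UqRel U E F K Kinv)
    (M : Type) [AddCommGroup M] [Module (RatFunc ℚ) M] [Module U M]
    [IsScalarTower (RatFunc ℚ) U M] [FiniteDimensional (RatFunc ℚ) M]
    (hwt : ∀ x : M, x ∈ Submodule.span (RatFunc ℚ)
      {y : M | ∃ lam : ℤ → ℤ, ∀ i : ℤ, K i • y = (qv ^ lam i) • y}) :
    (∀ (i : ℤ) (x : M), E i • x = 0 ∧ F i • x = 0) ∧
    (∀ (lam : ℤ → ℤ) (x : M), x ≠ 0 → (∀ i : ℤ, K i • x = (qv ^ lam i) • x) →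
      ∀ i j : ℤ, lam i = lam j) ∧
    (∃ (ι : Type) (bb : Module.Basis ι (RatFunc ℚ) M), ∀ a : ι,
      (∀ i : ℤ, E i • bb a = 0 ∧ F i • bb a = 0) ∧
      ∃ k : ℤ, ∀ i : ℤ, K i • bb a = (qv ^ k) • bb a) := by
  obtain ⟨hKK, hKKi, hKE, hKF, hEE, hEFc, hSE, hSF⟩ := hrel
  -- Kinv acts on weight vectors
  have hKinv : ∀ (lam : ℤ → ℤ) (x : M), x ∈ Wt K M lam → ∀ i : ℤ,
      Kinv i • x = (qv ^ (-lam i)) • x := by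
    intro lam x hx i
    have e1 : qv ^ (-lam i) * qv ^ (lam i) = 1 := by
      rw [← zpow_add₀ qv_ne_zero, neg_add_cancel, zpow_zero]
    calc Kinv i • x = Kinv i • ((qv ^ (-lam i) * qv ^ lam i) • x) := by rw [e1, one_smul]
      _ = Kinv i • (qv ^ (-lam i) • ((qv ^ lam i) • x)) := by rw [mul_smul]
      _ = Kinv i • (qv ^ (-lam i) • (K i • x)) := by rw [hx i]
      _ = qv ^ (-lam i) • (Kinv i • (K i • x)) := usmul_comm _ _ _
      _ = qv ^ (-lam i) • ((Kinv i * K i) • x) := by rw [mul_smul]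
      _ = qv ^ (-lam i) • x := by rw [(hKKi i).2, one_smul]
  -- E shifts weights by alpha
  have hEwt : ∀ (lam : ℤ → ℤ) (j : ℤ) (x : M), x ∈ Wt K M lam →
      E j • x ∈ Wt K M (addAlpha lam j) := by
    intro lam j x hx i
    have harg : addAlpha lam j i =
        (((if i = j then 1 else 0) - (if i = j + 1 then 1 else 0) : ℤ)) + lam i := by
      simp only [addAlpha]; ring
    calc K i • (E j • x) = (K i * E j) • x := by rw [mul_smul]
      _ = ((qv ^ (((if i = j then 1 else 0) - (if i = j + 1 then 1 else 0) : ℤ))) •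
            (E j * K i)) • x := by rw [hKE i j]
      _ = (qv ^ (((if i = j then 1 else 0) - (if i = j + 1 then 1 else 0) : ℤ))) •
            ((E j * K i) • x) := smul_assoc _ _ _
      _ = (qv ^ (((if i = j then 1 else 0) - (if i = j + 1 then 1 else 0) : ℤ))) •
            (E j • (K i • x)) := by rw [mul_smul]
      _ = (qv ^ (((if i = j then 1 else 0) - (if i = j + 1 then 1 else 0) : ℤ))) •
            (E j • ((qv ^ lam i) • x)) := by rw [hx i]
      _ = (qv ^ (((if i = j then 1 else 0) - (if i = j + 1 then 1 else 0) : ℤ))) •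
            ((qv ^ lam i) • (E j • x)) := by rw [usmul_comm]
      _ = (qv ^ ((((if i = j then 1 else 0) - (if i = j + 1 then 1 else 0) : ℤ)) + lam i)) •
            (E j • x) := by rw [smul_smul, ← zpow_add₀ qv_ne_zero]
      _ = (qv ^ (addAlpha lam j i)) • (E j • x) := by rw [harg]
  -- F shifts weights by -alpha
  have hFwt : ∀ (lam : ℤ → ℤ) (j : ℤ) (x : M), x ∈ Wt K M lam →
      F j • x ∈ Wt K M (subAlpha lam j) := by
    intro lam j x hx i
    have harg : subAlpha lam j i =
        (((if i = j + 1 then 1 else 0) - (if i = j then 1 else 0) : ℤ)) + lam i := by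
      simp only [subAlpha]; ring
    calc K i • (F j • x) = (K i * F j) • x := by rw [mul_smul]
      _ = ((qv ^ (((if i = j + 1 then 1 else 0) - (if i = j then 1 else 0) : ℤ))) •
            (F j * K i)) • x := by rw [hKF i j]
      _ = (qv ^ (((if i = j + 1 then 1 else 0) - (if i = j then 1 else 0) : ℤ))) •
            ((F j * K i) • x) := smul_assoc _ _ _
      _ = (qv ^ (((if i = j + 1 then 1 else 0) - (if i = j then 1 else 0) : ℤ))) •
            (F j • (K i • x)) := by rw [mul_smul]
      _ = (qv ^ (((if i = j + 1 then 1 else 0) - (if i = j then 1 else 0) : ℤ))) •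
            (F j • ((qv ^ lam i) • x)) := by rw [hx i]
      _ = (qv ^ (((if i = j + 1 then 1 else 0) - (if i = j then 1 else 0) : ℤ))) •
            ((qv ^ lam i) • (F j • x)) := by rw [usmul_comm]
      _ = (qv ^ ((((if i = j + 1 then 1 else 0) - (if i = j then 1 else 0) : ℤ)) + lam i)) •
            (F j • x) := by rw [smul_smul, ← zpow_add₀ qv_ne_zero]
      _ = (qv ^ (subAlpha lam j i)) • (F j • x) := by rw [harg]
  -- commutator argument
  have hcom0 : ∀ (lam : ℤ → ℤ) (x : M), x ∈ Wt K M lam → x ≠ 0 → ∀ i : ℤ,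
      E i • x = 0 → F i • x = 0 → lam i = lam (i+1) := by
    intro lam x hx hx0 i hE0 hF0
    have h := hEFc i i
    rw [if_pos rfl] at h
    have hL : (E i * F i - F i * E i) • x = 0 := by
      rw [sub_smul, mul_smul, mul_smul, hE0, hF0, smul_zero, smul_zero, sub_zero]
    have hA : (K i * Kinv (i+1)) • x = (qv ^ (lam i - lam (i+1))) • x := by
      have e : -lam (i+1) + lam i = lam i - lam (i+1) := by ring
      rw [mul_smul, hKinv lam x hx (i+1), usmul_comm, hx i, smul_smul,
        ← zpow_add₀ qv_ne_zero, e]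
    have hB : (Kinv i * K (i+1)) • x = (qv ^ (lam (i+1) - lam i)) • x := by
      have e : lam (i+1) + -lam i = lam (i+1) - lam i := by ring
      rw [mul_smul, hx (i+1), usmul_comm, hKinv lam x hx i, smul_smul,
        ← zpow_add₀ qv_ne_zero, e]
    have hsc : (((qv - qv⁻¹)⁻¹ * (qv ^ (lam i - lam (i+1)) - qv ^ (lam (i+1) - lam i)))) • x
        = 0 := by
      rw [mul_smul]
      calc (qv - qv⁻¹)⁻¹ • ((qv ^ (lam i - lam (i+1)) - qv ^ (lam (i+1) - lam i)) • x)
          = (qv - qv⁻¹)⁻¹ • ((qv ^ (lam i - lam (i+1))) • x - (qv ^ (lam (i+1) - lam i)) • x) := by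
            rw [sub_smul]
        _ = (qv - qv⁻¹)⁻¹ • ((K i * Kinv (i+1)) • x - (Kinv i * K (i+1)) • x) := by
            rw [hA, hB]
        _ = (qv - qv⁻¹)⁻¹ • ((K i * Kinv (i+1) - Kinv i * K (i+1)) • x) := by rw [sub_smul]
        _ = ((qv - qv⁻¹)⁻¹ • (K i * Kinv (i+1) - Kinv i * K (i+1))) • x := (smul_assoc _ _ _).symm
        _ = (E i * F i - F i * E i) • x := by rw [← h]
        _ = 0 := hL
    by_contra hab
    have hne1 : qv ^ (lam i - lam (i+1)) - qv ^ (lam (i+1) - lam i) ≠ 0 := by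
      rw [sub_ne_zero]
      intro hq
      have := qv_zpow_inj hq
      omega
    have hcne : ((qv - qv⁻¹)⁻¹ * (qv ^ (lam i - lam (i+1)) - qv ^ (lam (i+1) - lam i))) ≠ 0 :=
      mul_ne_zero qv_sub_inv_ne_zero hne1
    apply hx0
    calc x = (((qv - qv⁻¹)⁻¹ * (qv ^ (lam i - lam (i+1)) - qv ^ (lam (i+1) - lam i)))⁻¹ *
        ((qv - qv⁻¹)⁻¹ * (qv ^ (lam i - lam (i+1)) - qv ^ (lam (i+1) - lam i)))) • x := by
          rw [inv_mul_cancel₀ hcne, one_smul]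
      _ = _ • (_ • x) := mul_smul _ _ _
      _ = 0 := by rw [hsc, smul_zero]
  -- spanning machinery
  have hSspan : Submodule.span (RatFunc ℚ)
      {y : M | ∃ lam : ℤ → ℤ, ∀ i : ℤ, K i • y = (qv ^ lam i) • y} = ⊤ :=
    eq_top_iff.mpr fun x _ => hwt x
  obtain ⟨b, hbS, hbspan, hbli⟩ := exists_linearIndependent (RatFunc ℚ)
      {y : M | ∃ lam : ℤ → ℤ, ∀ i : ℤ, K i • y = (qv ^ lam i) • y}
  have hbfin : b.Finite := Set.finite_coe_iff.mp hbli.finite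
  have hchoice : ∀ y : M, y ∈ b → ∃ lam, y ∈ Wt K M lam := fun y hy =>
    (hbS hy).imp (fun lam h => mem_Wt.mpr h)
  choose! wfn hwfn using hchoice
  set L : Finset (ℤ → ℤ) := hbfin.toFinset.image wfn with hLdef
  have hbL : ∀ y ∈ b, wfn y ∈ L := fun y hy =>
    Finset.mem_image_of_mem wfn (hbfin.mem_toFinset.mpr hy)
  have htop : ∀ x : M, x ∈ L.sup (Wt K M) := by
    intro x
    have h1 : Submodule.span (RatFunc ℚ) b ≤ L.sup (Wt K M) :=
      Submodule.span_le.mpr (fun y hy => Finset.le_sup (f := Wt K M) (hbL y hy) (hwfn y hy))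
    exact h1 (by rw [hbspan, hSspan]; trivial)
  -- invariance of finite sups under the K-operators
  have hsupinv : ∀ (i0 : ℤ) (c0 : RatFunc ℚ) (s : Finset (ℤ → ℤ)) (z : M),
      z ∈ s.sup (Wt K M) → K i0 • z - c0 • z ∈ s.sup (Wt K M) := by
    intro i0 c0 s
    induction s using Finset.induction_on with
    | empty =>
      intro z hz
      rw [Finset.sup_empty, Submodule.mem_bot] at hz ⊢
      rw [hz, smul_zero, smul_zero, sub_zero]
    | @insert lam0 s' hns ih =>
      intro z hz
      rw [Finset.sup_insert] at hz ⊢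
      obtain ⟨y, hy, w, hw, rfl⟩ := Submodule.mem_sup.mp hz
      have e : K i0 • (y + w) - c0 • (y + w) =
          (K i0 • y - c0 • y) + (K i0 • w - c0 • w) := by
        rw [smul_add, smul_add]; abel
      rw [e]
      refine Submodule.add_mem_sup ?_ (ih w hw)
      refine Submodule.sub_mem _ ?_ (Submodule.smul_mem _ _ hy)
      rw [hy i0]
      exact Submodule.smul_mem _ _ hy
  -- key lemma: a weight vector in a sup of weight spaces of different weights is zero
  have keyA : ∀ (s : Finset (ℤ → ℤ)) (μ : ℤ → ℤ) (x : M), x ∈ Wt K M μ →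
      x ∈ s.sup (Wt K M) → (∀ lam ∈ s, ∃ i, lam i ≠ μ i) → x = 0 := by
    intro s
    induction s using Finset.induction_on with
    | empty =>
      intro μ x _ hxs _
      rw [Finset.sup_empty, Submodule.mem_bot] at hxs
      exact hxs
    | @insert lam0 s' hns ih =>
      intro μ x hxμ hxs hdiff
      rw [Finset.sup_insert] at hxs
      obtain ⟨y, hy, z, hz, hyz⟩ := Submodule.mem_sup.mp hxs
      obtain ⟨i0, hi0⟩ := hdiff lam0 (Finset.mem_insert_self _ _)
      have hc : (qv ^ μ i0 - qv ^ lam0 i0) ≠ 0 :=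
        sub_ne_zero.mpr (fun hq => hi0 (qv_zpow_inj hq).symm)
      have hpx : K i0 • x - qv ^ lam0 i0 • x = (qv ^ μ i0 - qv ^ lam0 i0) • x := by
        rw [hxμ i0, ← sub_smul]
      have hx2 : x ∈ s'.sup (Wt K M) := by
        have h1 : K i0 • x - qv ^ lam0 i0 • x ∈ s'.sup (Wt K M) := by
          have hxe : K i0 • x - qv ^ lam0 i0 • x = K i0 • z - qv ^ lam0 i0 • z := by
            rw [← hyz, smul_add, smul_add, hy i0]; abel
          rw [hxe]
          exact hsupinv i0 _ s' z hz
        rw [hpx] at h1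
        have h2 := Submodule.smul_mem (s'.sup (Wt K M)) (qv ^ μ i0 - qv ^ lam0 i0)⁻¹ h1
        rwa [← mul_smul, inv_mul_cancel₀ hc, one_smul] at h2
      exact ih μ x hxμ hx2 (fun lam hl => hdiff lam (Finset.mem_insert_of_mem hl))
  -- every weight lies in L
  have hWL : ∀ (μ : ℤ → ℤ) (x : M), x ≠ 0 → x ∈ Wt K M μ → μ ∈ L := by
    intro μ x hx0 hxμ
    by_contra hμL
    refine hx0 (keyA L μ x hxμ (htop x) ?_)
    intro lam hl
    have hne : lam ≠ μ := fun he => hμL (he ▸ hl)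
    exact Function.ne_iff.mp hne
  -- the finite set of "bad" indices
  set Jset : Set ℤ := ⋃ lam ∈ (L : Set (ℤ → ℤ)), ⋃ μ ∈ (L : Set (ℤ → ℤ)),
      {j : ℤ | μ = addAlpha lam j} with hJdef
  have hJfin : Jset.Finite := by
    rw [hJdef]
    apply Set.Finite.biUnion L.finite_toSet
    intro lam _
    apply Set.Finite.biUnion L.finite_toSet
    intro μ _
    apply Set.Subsingleton.finite
    intro j hj k hk
    have hj' : μ = addAlpha lam j := hj
    have hk' : μ = addAlpha lam k := hk
    have h1 := congrFun (hj'.symm.trans hk') j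
    simp only [addAlpha] at h1
    split_ifs at h1 <;> omega
  set T : Set ℤ := {i : ℤ | ∃ lam : ℤ → ℤ,
      (∃ x : M, x ≠ 0 ∧ x ∈ Wt K M lam) ∧ lam i ≠ lam (i+1)} with hTdef
  have hTJ : T ⊆ Jset := by
    intro i hi
    obtain ⟨lam, ⟨x, hx0, hxw⟩, hne⟩ := hi
    by_contra hiJ
    have hE0 : E i • x = 0 := by
      by_contra hE
      apply hiJ
      have h1 : lam ∈ L := hWL lam x hx0 hxw
      have h2 : addAlpha lam i ∈ L := hWL _ _ hE (hEwt lam i x hxw)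
      rw [hJdef]
      exact Set.mem_biUnion h1 (Set.mem_biUnion h2 rfl)
    have hF0 : F i • x = 0 := by
      by_contra hF
      apply hiJ
      have h1 : lam ∈ L := hWL lam x hx0 hxw
      have h2 : subAlpha lam i ∈ L := hWL _ _ hF (hFwt lam i x hxw)
      have h3 : lam = addAlpha (subAlpha lam i) i := by
        funext k; simp only [addAlpha, subAlpha]; split_ifs <;> omega
      rw [hJdef]
      exact Set.mem_biUnion h2 (Set.mem_biUnion h1 h3)
    exact hne (hcom0 lam x hxw hx0 i hE0 hF0)
  have hTfin : T.Finite := hJfin.subset hTJ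
  -- all weights are constant sequences
  have hconst : ∀ lam : ℤ → ℤ, (∃ x : M, x ≠ 0 ∧ x ∈ Wt K M lam) →
      ∀ i : ℤ, lam i = lam (i+1) := by
    by_contra hcon
    push_neg at hcon
    obtain ⟨lam, hwit, i, hnei⟩ := hcon
    have hTne : T.Nonempty := ⟨i, lam, hwit, hnei⟩
    have htfne : hTfin.toFinset.Nonempty := by
      rw [Set.Finite.toFinset_nonempty]; exact hTne
    set imax := hTfin.toFinset.max' htfne with hidef
    have hiT : imax ∈ T := hTfin.mem_toFinset.mp (hTfin.toFinset.max'_mem htfne)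
    obtain ⟨lam1, ⟨x, hx0, hxw⟩, hne⟩ := hiT
    have hstep : ∀ ν : ℤ → ℤ, (∃ z : M, z ≠ 0 ∧ z ∈ Wt K M ν) →
        ν (imax+1) = ν (imax+1+1) := by
      intro ν hν
      by_contra hcne
      have h1 : (imax+1) ∈ T := ⟨ν, hν, hcne⟩
      have h2 := hTfin.toFinset.le_max' (imax+1) (hTfin.mem_toFinset.mpr h1)
      omega
    have hEF0 : E imax • x ≠ 0 ∨ F imax • x ≠ 0 := by
      by_contra hc
      push_neg at hc
      exact hne (hcom0 lam1 x hxw hx0 imax hc.1 hc.2)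
    have h2 : lam1 (imax+1) = lam1 (imax+1+1) := hstep lam1 ⟨x, hx0, hxw⟩
    rcases hEF0 with hE | hF
    · have h1 := hstep (addAlpha lam1 imax) ⟨E imax • x, hE, hEwt lam1 imax x hxw⟩
      simp only [addAlpha] at h1
      split_ifs at h1 <;> omega
    · have h1 := hstep (subAlpha lam1 imax) ⟨F imax • x, hF, hFwt lam1 imax x hxw⟩
      simp only [subAlpha] at h1
      split_ifs at h1 <;> omega
  -- part 2
  have hP2 : ∀ (lam : ℤ → ℤ) (x : M), x ≠ 0 → (∀ i : ℤ, K i • x = (qv ^ lam i) • x) →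
      ∀ i j : ℤ, lam i = lam j := by
    intro lam x hx0 hK i j
    have hc := hconst lam ⟨x, hx0, mem_Wt.mpr hK⟩
    have hall : ∀ n : ℤ, lam n = lam 0 := by
      intro n
      induction n using Int.induction_on with
      | zero => rfl
      | succ k ih => have h1 := hc (k : ℤ); omega
      | pred k ih =>
        have h3 := hc (-(k:ℤ) - 1)
        have e : (-(k:ℤ) - 1 + 1 : ℤ) = -(k:ℤ) := by ring
        rw [e] at h3
        omega
    rw [hall i, hall j]
  -- part 1
  have hP1 : ∀ (i : ℤ) (x : M), E i • x = 0 ∧ F i • x = 0 := by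
    intro i x
    have hxb : x ∈ Submodule.span (RatFunc ℚ) b := by rw [hbspan, hSspan]; trivial
    constructor
    · have hz : Set.EqOn (⇑(actL M (E i))) (⇑(0 : M →ₗ[RatFunc ℚ] M)) b := by
        intro y hy
        show E i • y = 0
        by_contra hEy
        have hyne : y ≠ 0 := hbli.ne_zero ⟨y, hy⟩
        have hcl := hconst (wfn y) ⟨y, hyne, hwfn y hy⟩ i
        have hclm := hconst (addAlpha (wfn y) i)
          ⟨E i • y, hEy, hEwt (wfn y) i y (hwfn y hy)⟩ i
        simp only [addAlpha] at hclm
        split_ifs at hclm <;> omega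
      exact LinearMap.eqOn_span hz hxb
    · have hz : Set.EqOn (⇑(actL M (F i))) (⇑(0 : M →ₗ[RatFunc ℚ] M)) b := by
        intro y hy
        show F i • y = 0
        by_contra hFy
        have hyne : y ≠ 0 := hbli.ne_zero ⟨y, hy⟩
        have hcl := hconst (wfn y) ⟨y, hyne, hwfn y hy⟩ i
        have hclm := hconst (subAlpha (wfn y) i)
          ⟨F i • y, hFy, hFwt (wfn y) i y (hwfn y hy)⟩ i
        simp only [subAlpha] at hclm
        split_ifs at hclm <;> omega
      exact LinearMap.eqOn_span hz hxb
  -- assemble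
  refine ⟨hP1, hP2, ⟨b, Module.Basis.mk hbli ?_, ?_⟩⟩
  · rw [Subtype.range_val, hbspan, hSspan]
  · intro a
    simp only [Module.Basis.mk_apply]
    refine ⟨fun i => hP1 i a, ⟨wfn a 0, fun i => ?_⟩⟩
    have h1 := hwfn a a.2 i
    have h2 : wfn (a : M) i = wfn (a : M) 0 :=
      hP2 (wfn a) a (hbli.ne_zero a) (hwfn a a.2) i 0
    rw [h1, h2]
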